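/- Define a sequence of Laurent polynomials over $\mathbb{Z}$ by $p_1(t) = t+2$ and $p_n(t) = t + 2 + (t + 2 + t^{-1})(p_{n-1}(t) - t)$ for $n \ge 2$. Then for all $n \ge 1$, $p_n(t) = t + 2\sum_{k=1}^{n}\binom{n}{k}(t+1+t^{-1})^{k-1}$. -/

import Mathlib

open LaurentPolynomial Finset

lemma key_sum {R : Type*} [CommRing R] (u : R) (n : ℕ) :
    ∑ k ∈ Finset.Icc 1 (n + 1), ((n + 1).choose k : R) * u ^ (k - 1) =
      1 + (u + 1) * ∑ k ∈ Finset.Icc 1 n, (n.choose k : R) * u ^ (k - 1) := by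
  have hshift : ∀ m : ℕ, ∑ k ∈ Finset.Icc 1 m, (m.choose k : R) * u ^ (k - 1) =
      ∑ k ∈ Finset.range m, (m.choose (k + 1) : R) * u ^ k := by
    intro m
    rw [← Finset.Ico_add_one_right_eq_Icc, Finset.sum_Ico_eq_sum_range]
    simp [add_comm 1]
  rw [hshift, hshift]
  induction n with
  | zero => simp
  | succ n ih =>
    rw [Finset.sum_range_succ]
    have hp : ∀ k, ((n + 2).choose (k + 1) : R) =
        ((n + 1).choose (k + 1) : R) + ((n + 1).choose k : R) := by
      intro k
      push_cast [Nat.choose_succ_succ (n + 1) k]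
      ring
    have : ∑ k ∈ Finset.range (n + 1), ((n + 2).choose (k + 1) : R) * u ^ k =
        ∑ k ∈ Finset.range (n + 1), (((n + 1).choose (k + 1) : R) * u ^ k
          + ((n + 1).choose k : R) * u ^ k) := by
      apply Finset.sum_congr rfl
      intro k _
      rw [hp k]; ring
    rw [this, Finset.sum_add_distrib]
    have h2 : ∑ k ∈ Finset.range (n + 1), ((n + 1).choose k : R) * u ^ k =
        1 + u * ∑ k ∈ Finset.range n, ((n + 1).choose (k + 1) : R) * u ^ k := by
      rw [Finset.sum_range_succ', Finset.mul_sum]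
      simp only [Nat.choose_zero_right, Nat.cast_one, pow_zero, mul_one]
      rw [add_comm]
      congr 1
      apply Finset.sum_congr rfl
      intro k _
      ring
    rw [h2]
    have h3 : ((n + 2).choose (n + 1 + 1) : R) = ((n + 1).choose (n + 1) : R) := by
      norm_num
    rw [h3]
    have h4 : ∑ k ∈ Finset.range (n + 1), ((n + 1).choose (k + 1) : R) * u ^ k =
        (∑ k ∈ Finset.range n, ((n + 1).choose (k + 1) : R) * u ^ k)
          + ((n + 1).choose (n + 1) : R) * u ^ n := by
      rw [Finset.sum_range_succ]
    rw [h4]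
    simp [Nat.choose_self]
    ring

theorem iterated_double_polynomial (p : ℕ → LaurentPolynomial ℤ)
    (h1 : p 1 = T 1 + 2)
    (hrec : ∀ n, 2 ≤ n → p n = T 1 + 2 + (T 1 + 2 + T (-1)) * (p (n - 1) - T 1)) :
    ∀ n, 1 ≤ n →
      p n = T 1 + 2 * ∑ k ∈ Finset.Icc 1 n,
        (n.choose k : LaurentPolynomial ℤ) * (T 1 + 1 + T (-1)) ^ (k - 1) := by
  intro n hn
  induction n with
  | zero => omega
  | succ n ih =>
    rcases Nat.eq_or_lt_of_le hn with h | h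
    · rw [← h] at *
      simpa using h1
    · have hn1 : 1 ≤ n := by omega
      have hrec' := hrec (n + 1) (by omega)
      simp only [Nat.add_sub_cancel] at hrec'
      rw [hrec', ih hn1, key_sum]
      ring
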